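/- Let B be a d×d real matrix with B^T + B ≤ 0. If there exists τ > 0 such that ‖e^{τB}x‖ = ‖x‖, then ‖e^{tB}x‖ = ‖x‖ for all t ∈ R. -/

import Mathlib

open Matrix

attribute [local instance] Matrix.linftyOpNormedRing Matrix.linftyOpNormedAlgebra

/-- The Euclidean norm on `ℝ^d`. -/
noncomputable def eNorm {d : ℕ} (x : Fin d → ℝ) : ℝ := Real.sqrt (x ⬝ᵥ x)

noncomputable def matCLM {d : ℕ} : Matrix (Fin d) (Fin d) ℝ →ₐ[ℝ] ((Fin d → ℝ) →L[ℝ] (Fin d → ℝ)) :=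
  (Module.End.toContinuousLinearMap (Fin d → ℝ)).toAlgHom.comp Matrix.toLinAlgEquiv'.toAlgHom

lemma matCLM_apply {d : ℕ} (M : Matrix (Fin d) (Fin d) ℝ) (v : Fin d → ℝ) :
    matCLM M v = M.mulVec v := rfl

lemma matCLM_continuous {d : ℕ} : Continuous (matCLM (d := d)) :=
  LinearMap.continuous_of_finiteDimensional (matCLM (d := d)).toLinearMap

/-- If the norm of `e^{τB}x` equals that of `x` for a single `τ > 0`, then the norm is
preserved for all times. -/
theorem norm_preserved_of_single_time {d : ℕ} (B : Matrix (Fin d) (Fin d) ℝ)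
    (hB : ∀ x : Fin d → ℝ, x ⬝ᵥ ((Bᵀ + B).mulVec x) ≤ 0)
    (x : Fin d → ℝ) (τ : ℝ) (hτ : 0 < τ)
    (h : eNorm ((NormedSpace.exp (τ • B)).mulVec x) = eNorm x) :
    ∀ t : ℝ, eNorm ((NormedSpace.exp (t • B)).mulVec x) = eNorm x := by
  set A := matCLM B with hA
  set y : ℝ → (Fin d → ℝ) := fun t => NormedSpace.exp (t • A) x with hy
  have key : ∀ t : ℝ, (NormedSpace.exp (t • B)).mulVec x = y t := by
    intro t
    have h0 := NormedSpace.map_exp matCLM matCLM_continuous (t • B)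
    rw [_root_.map_smul] at h0
    rw [← matCLM_apply]
    exact congrArg (fun M => M x) h0
  set f : ℝ → ℝ := fun t => y t ⬝ᵥ y t with hf
  -- derivative of y
  have hyderiv : ∀ t : ℝ, HasDerivAt y (B.mulVec (y t)) t := by
    intro t
    have h1 : HasDerivAt (fun u : ℝ => NormedSpace.exp (u • A)) (A * NormedSpace.exp (t • A)) t :=
      hasDerivAt_exp_smul_const' A t
    have h2 := h1.clm_apply (hasDerivAt_const t x)
    simp only [ContinuousLinearMap.mul_apply, smul_zero, add_zero, map_zero] at h2
    have h3 : A (NormedSpace.exp (t • A) x) = B.mulVec (y t) := by rw [hy, hA, matCLM_apply]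
    rw [← h3]
    exact h2
  have hcomp : ∀ (t : ℝ) (i : Fin d), HasDerivAt (fun s => y s i) (B.mulVec (y t) i) t :=
    fun t i => hasDerivAt_pi.mp (hyderiv t) i
  have hfeq : f = fun s => ∑ i, y s i * y s i := by
    funext s; simp [hf, dotProduct]
  have hfderiv : ∀ t : ℝ, HasDerivAt f (y t ⬝ᵥ ((Bᵀ + B).mulVec (y t))) t := by
    intro t
    have h1 : HasDerivAt f
        (∑ i, (B.mulVec (y t) i * y t i + y t i * B.mulVec (y t) i)) t := by
      rw [hfeq]
      exact HasDerivAt.fun_sum fun i _ => (hcomp t i).mul (hcomp t i)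
    convert h1 using 1
    have swap : (B.mulVec (y t)) ⬝ᵥ (y t) = (y t) ⬝ᵥ (Bᵀ.mulVec (y t)) := by
      rw [dotProduct_mulVec, vecMul_transpose]
    calc y t ⬝ᵥ ((Bᵀ + B).mulVec (y t))
        = y t ⬝ᵥ (Bᵀ.mulVec (y t)) + y t ⬝ᵥ (B.mulVec (y t)) := by
          rw [add_mulVec, dotProduct_add]
      _ = (B.mulVec (y t)) ⬝ᵥ (y t) + y t ⬝ᵥ (B.mulVec (y t)) := by rw [swap]
      _ = ∑ i, (B.mulVec (y t) i * y t i + y t i * B.mulVec (y t) i) := by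
          rw [dotProduct, dotProduct, ← Finset.sum_add_distrib]
  have hdiff : Differentiable ℝ f := fun t => (hfderiv t).differentiableAt
  have hanti : Antitone f := by
    apply antitone_of_deriv_nonpos hdiff
    intro t
    rw [(hfderiv t).deriv]
    exact hB (y t)
  have hfnonneg : ∀ t, 0 ≤ f t := fun t =>
    Finset.sum_nonneg fun i _ => mul_self_nonneg _
  have hf0 : f 0 = x ⬝ᵥ x := by
    simp [hf, hy, NormedSpace.exp_zero, zero_smul]
  have hxnn : (0:ℝ) ≤ x ⬝ᵥ x := Finset.sum_nonneg fun i _ => mul_self_nonneg _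
  have hfτ : f τ = f 0 := by
    have h' := h
    rw [eNorm, eNorm, key τ] at h'
    rw [hf0]
    exact (Real.sqrt_inj (hfnonneg τ) hxnn).mp h'
  -- f is constant on [0, τ]
  have hconst : ∀ s ∈ Set.Ioo 0 τ, f s = f 0 := by
    intro s hs
    have h1 : f s ≤ f 0 := hanti hs.1.le
    have h2 : f τ ≤ f s := hanti hs.2.le
    linarith [hfτ]
  -- analyticity of f
  have hyan : ∀ i : Fin d, AnalyticOnNhd ℝ (fun s => y s i) Set.univ := by
    intro i
    intro t _
    have h1 : AnalyticAt ℝ (fun s : ℝ => s • A) t :=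
      (analyticAt_id).smul analyticAt_const
    have h2 : AnalyticAt ℝ (NormedSpace.exp ∘ (fun s : ℝ => s • A)) t :=
      (NormedSpace.exp_analytic _).comp h1
    have h2' : AnalyticAt ℝ (fun s : ℝ => NormedSpace.exp (s • A)) t := h2
    set L : ((Fin d → ℝ) →L[ℝ] (Fin d → ℝ)) →L[ℝ] ℝ :=
      (ContinuousLinearMap.proj i).comp (ContinuousLinearMap.apply ℝ (Fin d → ℝ) x) with hL
    have h3 : AnalyticAt ℝ (⇑L ∘ (fun s : ℝ => NormedSpace.exp (s • A))) t :=
      (L.analyticAt _).comp h2'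
    have h4 : (⇑L ∘ (fun s : ℝ => NormedSpace.exp (s • A))) = fun s => y s i := by
      funext s; simp [Function.comp, hL, hy]
    rwa [h4] at h3
  have hfan : AnalyticOnNhd ℝ f Set.univ := by
    rw [hfeq]
    intro t ht
    exact Finset.analyticAt_fun_sum Finset.univ fun i _ => (hyan i t ht).mul (hyan i t ht)
  have hgan : AnalyticOnNhd ℝ (fun _ : ℝ => f 0) Set.univ := fun t _ => analyticAt_const
  have heq : f = fun _ => f 0 := by
    apply hfan.eq_of_eventuallyEq hgan (z₀ := τ / 2)
    have hmem : Set.Ioo (0:ℝ) τ ∈ nhds (τ / 2) :=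
      (isOpen_Ioo).mem_nhds ⟨by linarith, by linarith⟩
    exact Filter.eventuallyEq_of_mem hmem hconst
  intro t
  rw [eNorm, eNorm, key t]
  have : y t ⬝ᵥ y t = x ⬝ᵥ x := by
    have := congrFun heq t
    simpa [hf0] using this
  rw [this]
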